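/- Fix θ = (φ, ρ11, ρ12, ρ21, ρ22) ∈ ℝ^5. There exists a real constant C such that: (i) C ≤ λ_min(Q̃_{n1,n2}(θ)) for all integers n1, n2 ≥ 3; and (ii) for every ε > 0 there exists N ≥ 3 such that |λ_min(Q̃_{n1,n2}(θ)) − C| < ε for all n1, n2 ≥ N. (The smallest eigenvalues of the block-circulant approximations are uniformly bounded below by a constant to which they converge as n1, n2 → ∞.) -/

import Mathlib

open Matrix

/-- Smallest element of the real spectrum of a real (symmetric) matrix. -/
noncomputable def lamMin {m : Type} [Fintype m] [DecidableEq m] (M : Matrix m m ℝ) : ℝ :=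
  sInf (spectrum ℝ M)

/-- Block-Toeplitz block `T_{n1,n2}(x,y,z)`, indexed by pairs `(a,b)` with
`a ∈ Fin n2`, `b ∈ Fin n1`. -/
def Tmat (n1 n2 : ℕ) (x y z : ℝ) :
    Matrix (Fin n2 × Fin n1) (Fin n2 × Fin n1) ℝ := fun p q =>
  if q = p then y
  else if (q.1 = p.1 ∧ (q.2 : ℕ) = (p.2 : ℕ) + 1) ∨ (q.2 = p.2 ∧ (q.1 : ℕ) = (p.1 : ℕ) + 1) then z
  else if (q.1 = p.1 ∧ (q.2 : ℕ) + 1 = (p.2 : ℕ)) ∨ (q.2 = p.2 ∧ (q.1 : ℕ) + 1 = (p.1 : ℕ)) then x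
  else 0

/-- Block-circulant block `C_{n1,n2}(x,y,z)`. -/
def Cmat (n1 n2 : ℕ) (x y z : ℝ) :
    Matrix (Fin n2 × Fin n1) (Fin n2 × Fin n1) ℝ := fun p q =>
  if q = p then y
  else if (q.1 = p.1 ∧ (q.2 : ℕ) = ((p.2 : ℕ) + 1) % n1) ∨
          (q.2 = p.2 ∧ (q.1 : ℕ) = ((p.1 : ℕ) + 1) % n2) then z
  else if (q.1 = p.1 ∧ ((q.2 : ℕ) + 1) % n1 = (p.2 : ℕ)) ∨
          (q.2 = p.2 ∧ ((q.1 : ℕ) + 1) % n2 = (p.1 : ℕ)) then x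
  else 0

/-- The precision matrix `Q_{n1,n2}(θ)`, `θ = (φ, ρ11, ρ12, ρ21, ρ22)`. -/
def Qmat (n1 n2 : ℕ) (φ ρ11 ρ12 ρ21 ρ22 : ℝ) :
    Matrix ((Fin n2 × Fin n1) ⊕ (Fin n2 × Fin n1)) ((Fin n2 × Fin n1) ⊕ (Fin n2 × Fin n1)) ℝ :=
  Matrix.fromBlocks (Tmat n1 n2 ρ11 1 ρ11) (Tmat n1 n2 ρ21 φ ρ12)
    (Tmat n1 n2 ρ21 φ ρ12)ᵀ (Tmat n1 n2 ρ22 1 ρ22)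

/-- The block-circulant (toroidal) approximation `Q̃_{n1,n2}(θ)`. -/
def Qcmat (n1 n2 : ℕ) (φ ρ11 ρ12 ρ21 ρ22 : ℝ) :
    Matrix ((Fin n2 × Fin n1) ⊕ (Fin n2 × Fin n1)) ((Fin n2 × Fin n1) ⊕ (Fin n2 × Fin n1)) ℝ :=
  Matrix.fromBlocks (Cmat n1 n2 ρ11 1 ρ11) (Cmat n1 n2 ρ21 φ ρ12)
    (Cmat n1 n2 ρ21 φ ρ12)ᵀ (Cmat n1 n2 ρ22 1 ρ22)


section Aux
open Complex

def nxt {m : ℕ} (i : Fin m) : Fin m := ⟨((i : ℕ) + 1) % m, Nat.mod_lt _ i.pos⟩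
def prv {m : ℕ} (i : Fin m) : Fin m := ⟨((i : ℕ) + (m - 1)) % m, Nat.mod_lt _ i.pos⟩

lemma nxt_val {m : ℕ} (i : Fin m) : ((nxt i : Fin m) : ℕ) = ((i : ℕ) + 1) % m := rfl
lemma prv_val {m : ℕ} (i : Fin m) : ((prv i : Fin m) : ℕ) = ((i : ℕ) + (m - 1)) % m := rfl

lemma nxt_prv {m : ℕ} (i : Fin m) : nxt (prv i) = i := by
  have hm : 1 ≤ m := i.pos
  apply Fin.ext
  show ((i + (m-1)) % m + 1) % m = i
  rw [Nat.mod_add_mod]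
  have : (i : ℕ) + (m-1) + 1 = (i : ℕ) + m := by omega
  rw [this, Nat.add_mod_right, Nat.mod_eq_of_lt i.isLt]

lemma prv_nxt {m : ℕ} (i : Fin m) : prv (nxt i) = i := by
  have hm : 1 ≤ m := i.pos
  apply Fin.ext
  show ((i + 1) % m + (m-1)) % m = i
  rw [Nat.mod_add_mod]
  have : (i : ℕ) + 1 + (m-1) = (i : ℕ) + m := by omega
  rw [this, Nat.add_mod_right, Nat.mod_eq_of_lt i.isLt]

lemma nxt_eq_iff {m : ℕ} {i j : Fin m} : nxt i = j ↔ i = prv j :=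
  ⟨fun h => by rw [← h, prv_nxt], fun h => by rw [h, nxt_prv]⟩

lemma nxt_ne {m : ℕ} (hm : 3 ≤ m) (i : Fin m) : nxt i ≠ i := by
  intro h
  have h' : ((i : ℕ) + 1) % m = (i : ℕ) := congrArg Fin.val h
  rcases Nat.lt_or_ge ((i : ℕ) + 1) m with h2 | h2
  · rw [Nat.mod_eq_of_lt h2] at h'; omega
  · have hi := i.isLt
    have : (i : ℕ) + 1 = m := by omega
    rw [this, Nat.mod_self] at h'; omega

lemma prv_ne {m : ℕ} (hm : 3 ≤ m) (i : Fin m) : prv i ≠ i := by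
  intro h
  have h2 := congrArg nxt h
  rw [nxt_prv] at h2
  exact nxt_ne hm i h2.symm

lemma nxt_ne_prv {m : ℕ} (hm : 3 ≤ m) (i : Fin m) : nxt i ≠ prv i := by
  intro h
  have h2 : nxt (nxt i) = i := by rw [h, nxt_prv]
  have hv : (((i : ℕ) + 1) % m + 1) % m = (i : ℕ) := congrArg Fin.val h2
  rw [Nat.mod_add_mod] at hv
  have hmod : ((i:ℕ) + 2) % m = (i:ℕ) % m := by
    rw [Nat.mod_eq_of_lt i.isLt]
    have : (i:ℕ) + 1 + 1 = (i:ℕ) + 2 := by omega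
    rw [← this]; exact hv
  have hdvd : m ∣ ((i : ℕ) + 2) - (i : ℕ) := (Nat.modEq_iff_dvd' (by omega)).mp hmod.symm
  have : m ∣ 2 := by simpa using hdvd
  have := Nat.le_of_dvd (by omega) this
  omega

lemma Cmat_apply {n1 n2 : ℕ} (h1 : 3 ≤ n1) (h2 : 3 ≤ n2) (x y z : ℝ)
    (p q : Fin n2 × Fin n1) :
    Cmat n1 n2 x y z p q =
      (if q = p then y else 0)
      + ((if q = (p.1, nxt p.2) then z else 0) + (if q = (nxt p.1, p.2) then z else 0))
      + ((if q = (p.1, prv p.2) then x else 0) + (if q = (prv p.1, p.2) then x else 0)) := by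
  have e2 : ∀ i j : Fin n1, ((i : ℕ) = ((j : ℕ) + 1) % n1) ↔ i = nxt j := by
    intro i j; rw [Fin.ext_iff]; rfl
  have f2 : ∀ i j : Fin n1, (((i : ℕ) + 1) % n1 = (j : ℕ)) ↔ i = prv j := by
    intro i j; rw [← nxt_eq_iff, Fin.ext_iff]; rfl
  have e1 : ∀ i j : Fin n2, ((i : ℕ) = ((j : ℕ) + 1) % n2) ↔ i = nxt j := by
    intro i j; rw [Fin.ext_iff]; rfl
  have f1 : ∀ i j : Fin n2, (((i : ℕ) + 1) % n2 = (j : ℕ)) ↔ i = prv j := by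
    intro i j; rw [← nxt_eq_iff, Fin.ext_iff]; rfl
  have hz : ((q.1 = p.1 ∧ (q.2 : ℕ) = ((p.2 : ℕ) + 1) % n1) ∨
          (q.2 = p.2 ∧ (q.1 : ℕ) = ((p.1 : ℕ) + 1) % n2)) ↔
      (q = (p.1, nxt p.2) ∨ q = (nxt p.1, p.2)) := by
    rw [e2, e1, Prod.ext_iff, Prod.ext_iff]; tauto
  have hx : ((q.1 = p.1 ∧ ((q.2 : ℕ) + 1) % n1 = (p.2 : ℕ)) ∨
          (q.2 = p.2 ∧ ((q.1 : ℕ) + 1) % n2 = (p.1 : ℕ))) ↔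
      (q = (p.1, prv p.2) ∨ q = (prv p.1, p.2)) := by
    rw [f2, f1, Prod.ext_iff, Prod.ext_iff]; tauto
  rw [show Cmat n1 n2 x y z p q = (if q = p then y
      else if (q = (p.1, nxt p.2) ∨ q = (nxt p.1, p.2)) then z
      else if (q = (p.1, prv p.2) ∨ q = (prv p.1, p.2)) then x else 0) by
    unfold Cmat; simp only [hz, hx]]
  -- exclusivity facts
  have A1 : (p.1, nxt p.2) ≠ p := by
    intro h; exact nxt_ne h1 p.2 (congrArg Prod.snd h)
  have A2 : (nxt p.1, p.2) ≠ p := by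
    intro h; exact nxt_ne h2 p.1 (congrArg Prod.fst h)
  have A3 : (p.1, prv p.2) ≠ p := by
    intro h; exact prv_ne h1 p.2 (congrArg Prod.snd h)
  have A4 : (prv p.1, p.2) ≠ p := by
    intro h; exact prv_ne h2 p.1 (congrArg Prod.fst h)
  have B1 : ((p.1, nxt p.2) : Fin n2 × Fin n1) ≠ (nxt p.1, p.2) := by
    intro h; exact nxt_ne h1 p.2 (congrArg Prod.snd h)
  have B2 : ((p.1, nxt p.2) : Fin n2 × Fin n1) ≠ (p.1, prv p.2) := by
    intro h; exact nxt_ne_prv h1 p.2 (congrArg Prod.snd h)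
  have B3 : ((p.1, nxt p.2) : Fin n2 × Fin n1) ≠ (prv p.1, p.2) := by
    intro h; exact nxt_ne h1 p.2 (congrArg Prod.snd h)
  have B4 : ((nxt p.1, p.2) : Fin n2 × Fin n1) ≠ (p.1, prv p.2) := by
    intro h; exact nxt_ne h2 p.1 (congrArg Prod.fst h)
  have B5 : ((nxt p.1, p.2) : Fin n2 × Fin n1) ≠ (prv p.1, p.2) := by
    intro h; exact nxt_ne_prv h2 p.1 (congrArg Prod.fst h)
  have B6 : ((p.1, prv p.2) : Fin n2 × Fin n1) ≠ (prv p.1, p.2) := by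
    intro h; exact prv_ne h1 p.2 (congrArg Prod.snd h)
  by_cases c0 : q = p
  · subst c0
    simp [Ne.symm A1, Ne.symm A2, Ne.symm A3, Ne.symm A4, A1, A2, A3, A4]
  by_cases c1 : q = (p.1, nxt p.2)
  · subst c1
    simp [c0, B1, B2, B3, Ne.symm B1, Ne.symm B2, Ne.symm B3]
  by_cases c2 : q = (nxt p.1, p.2)
  · subst c2
    simp [c0, B4, B5, Ne.symm B1, Ne.symm B4, Ne.symm B5]
  by_cases c3 : q = (p.1, prv p.2)
  · subst c3
    simp [c0, Ne.symm B2, Ne.symm B4, B6, Ne.symm B6]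
  by_cases c4 : q = (prv p.1, p.2)
  · subst c4
    simp [c0, Ne.symm B3, Ne.symm B5, Ne.symm B6]
  · simp [c0, c1, c2, c3, c4]

section TP
variable {n1 n2 : ℕ} (h1 : 3 ≤ n1) (h2 : 3 ≤ n2)

lemma Cmat_transpose (h1 : 3 ≤ n1) (h2 : 3 ≤ n2) (x y z : ℝ) :
    (Cmat n1 n2 x y z)ᵀ = Cmat n1 n2 z y x := by
  ext p q
  rw [transpose_apply, Cmat_apply h1 h2 x y z q p, Cmat_apply h1 h2 z y x p q]
  have r0 : (p = q) ↔ (q = p) := eq_comm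
  have r1 : (p = (q.1, nxt q.2)) ↔ (q = (p.1, prv p.2)) := by
    constructor
    · rintro rfl; simp [prv_nxt]
    · rintro rfl; simp [nxt_prv]
  have r2 : (p = (nxt q.1, q.2)) ↔ (q = (prv p.1, p.2)) := by
    constructor
    · rintro rfl; simp [prv_nxt]
    · rintro rfl; simp [nxt_prv]
  have r3 : (p = (q.1, prv q.2)) ↔ (q = (p.1, nxt p.2)) := by
    constructor
    · rintro rfl; simp [nxt_prv]
    · rintro rfl; simp [prv_nxt]
  have r4 : (p = (prv q.1, q.2)) ↔ (q = (nxt p.1, p.2)) := by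
    constructor
    · rintro rfl; simp [nxt_prv]
    · rintro rfl; simp [prv_nxt]
  simp only [r0, r1, r2, r3, r4]
  ring

end TP

noncomputable section FOUR
open Complex

def ang (n k : ℕ) : ℝ := 2 * Real.pi * k / n

def zet (n k : ℕ) : ℂ := Complex.exp ((ang n k : ℝ) * Complex.I)

lemma zet_ne_zero (n k : ℕ) : zet n k ≠ 0 := Complex.exp_ne_zero _

lemma zet_pow_n {n : ℕ} (hn : n ≠ 0) (k : ℕ) : zet n k ^ n = 1 := by
  rw [zet, ← Complex.exp_nat_mul]
  have hn' : (n : ℂ) ≠ 0 := Nat.cast_ne_zero.mpr hn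
  have : (n : ℂ) * ((ang n k : ℝ) * Complex.I) = (k : ℂ) * (2 * (Real.pi : ℂ) * Complex.I) := by
    rw [ang]
    push_cast
    field_simp
  rw [this]
  exact_mod_cast Complex.exp_int_mul_two_pi_mul_I k

lemma zet_pow_mod {n : ℕ} (hn : n ≠ 0) (k m : ℕ) : zet n k ^ (m % n) = zet n k ^ m := by
  conv_rhs => rw [← Nat.div_add_mod m n]
  rw [pow_add, pow_mul, zet_pow_n hn, one_pow, one_mul]

def fvec (n1 n2 : ℕ) (κ : Fin n2 × Fin n1) : Fin n2 × Fin n1 → ℂ :=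
  fun p => zet n2 κ.1 ^ (p.1 : ℕ) * zet n1 κ.2 ^ (p.2 : ℕ)

variable {n1 n2 : ℕ} (h1 : 3 ≤ n1) (h2 : 3 ≤ n2)

lemma fvec_nxt2 (h1 : 3 ≤ n1) (κ p) : fvec n1 n2 κ (p.1, nxt p.2) = zet n1 κ.2 * fvec n1 n2 κ p := by
  unfold fvec
  rw [nxt_val, zet_pow_mod (by omega), pow_succ]
  ring

lemma fvec_nxt1 (h2 : 3 ≤ n2) (κ p) : fvec n1 n2 κ (nxt p.1, p.2) = zet n2 κ.1 * fvec n1 n2 κ p := by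
  unfold fvec
  rw [nxt_val, zet_pow_mod (by omega), pow_succ]
  ring

lemma zet_pow_sub_one {n : ℕ} (hn : 3 ≤ n) (k : ℕ) : zet n k ^ (n - 1) = (zet n k)⁻¹ := by
  have h : zet n k * zet n k ^ (n - 1) = 1 := by
    rw [← pow_succ']
    have : n - 1 + 1 = n := by omega
    rw [this, zet_pow_n (by omega)]
  exact mul_left_cancel₀ (zet_ne_zero n k) (h.trans (mul_inv_cancel₀ (zet_ne_zero n k)).symm)

lemma fvec_prv2 (h1 : 3 ≤ n1) (κ p) : fvec n1 n2 κ (p.1, prv p.2) = (zet n1 κ.2)⁻¹ * fvec n1 n2 κ p := by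
  unfold fvec
  rw [prv_val, zet_pow_mod (by omega), pow_add, zet_pow_sub_one h1]
  ring

lemma fvec_prv1 (h2 : 3 ≤ n2) (κ p) : fvec n1 n2 κ (prv p.1, p.2) = (zet n2 κ.1)⁻¹ * fvec n1 n2 κ p := by
  unfold fvec
  rw [prv_val, zet_pow_mod (by omega), pow_add, zet_pow_sub_one h2]
  ring

def symC (n1 n2 : ℕ) (x y z : ℝ) (κ : Fin n2 × Fin n1) : ℂ :=
  (y : ℂ) + (z : ℂ) * (zet n1 κ.2 + zet n2 κ.1) + (x : ℂ) * ((zet n1 κ.2)⁻¹ + (zet n2 κ.1)⁻¹)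

lemma sum_ite_coll (a : Fin n2 × Fin n1) (c : ℂ) (v : Fin n2 × Fin n1 → ℂ) :
    ∑ q : Fin n2 × Fin n1, (if q = a then c else 0) * v q = c * v a := by
  rw [Finset.sum_eq_single a]
  · simp
  · intro b _ hb; simp [hb]
  · intro h; simp at h

lemma Cmat_row_sum (h1 : 3 ≤ n1) (h2 : 3 ≤ n2) (x y z : ℝ) (κ p) :
    ∑ q, ((Cmat n1 n2 x y z p q : ℝ) : ℂ) * fvec n1 n2 κ q
      = symC n1 n2 x y z κ * fvec n1 n2 κ p := by
  have : ∀ q, ((Cmat n1 n2 x y z p q : ℝ) : ℂ) =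
      (if q = p then (y:ℂ) else 0)
      + ((if q = (p.1, nxt p.2) then (z:ℂ) else 0) + (if q = (nxt p.1, p.2) then (z:ℂ) else 0))
      + ((if q = (p.1, prv p.2) then (x:ℂ) else 0) + (if q = (prv p.1, p.2) then (x:ℂ) else 0)) := by
    intro q
    rw [Cmat_apply h1 h2 x y z p q]
    push_cast [apply_ite (fun r : ℝ => (r : ℂ))]
    ring
  simp only [this, add_mul, Finset.sum_add_distrib, sum_ite_coll]
  rw [fvec_nxt2 h1, fvec_nxt1 h2, fvec_prv2 h1, fvec_prv1 h2, symC]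
  ring

end FOUR

noncomputable section
lemma zet_geom {n : ℕ} (hn : 3 ≤ n) (k k' : Fin n) :
    ∑ a : Fin n, ((zet n (k : ℕ))⁻¹ * zet n (k' : ℕ)) ^ (a : ℕ)
      = if k' = k then (n : ℂ) else 0 := by
  set μ := (zet n (k : ℕ))⁻¹ * zet n (k' : ℕ) with hμ
  by_cases hkk : k' = k
  · subst hkk
    have : μ = 1 := inv_mul_cancel₀ (zet_ne_zero n k')
    simp [this]
  · rw [if_neg hkk]
    have hμn : μ ^ n = 1 := by
      rw [hμ, mul_pow, inv_pow, zet_pow_n (by omega), zet_pow_n (by omega)]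
      simp
    have hμ1 : μ ≠ 1 := by
      intro he
      have : zet n (k' : ℕ) = zet n (k : ℕ) := by
        have := congrArg (fun w => zet n (k : ℕ) * w) he
        simpa [hμ, mul_inv_cancel_left₀ (zet_ne_zero n (k : ℕ))] using this
      rw [zet, zet, Complex.exp_eq_exp_iff_exists_int] at this
      obtain ⟨m, hm⟩ := this
      have hI : ((ang n (k' : ℕ) : ℝ) : ℂ) = ((ang n (k : ℕ) + m * (2 * Real.pi) : ℝ) : ℂ) := by
        apply mul_right_cancel₀ Complex.I_ne_zero
        push_cast
        push_cast at hm
        linear_combination hm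
      have hr : ang n (k' : ℕ) = ang n (k : ℕ) + m * (2 * Real.pi) :=
        Complex.ofReal_injective hI
      rw [ang, ang] at hr
      have hπ : Real.pi ≠ 0 := Real.pi_ne_zero
      have hn0 : (n : ℝ) ≠ 0 := by positivity
      have hkr : (k' : ℝ) = (k : ℝ) + m * n := by
        field_simp at hr
        have h2π : (2 : ℝ) * Real.pi ≠ 0 := by positivity
        have := mul_left_cancel₀ h2π (show 2 * Real.pi * (k' : ℝ)
            = 2 * Real.pi * ((k : ℝ) + m * n) by rw [hr]; ring)
        linarith [this]
      have hki : (k' : ℤ) = (k : ℤ) + m * n := by exact_mod_cast hkr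
      have hd : (n : ℤ) ∣ ((k' : ℤ) - (k : ℤ)) := ⟨m, by linarith⟩
      have habs : |((k' : ℤ) - (k : ℤ))| < (n : ℤ) := by
        have := k.isLt; have := k'.isLt
        rw [abs_lt]; omega
      have := Int.eq_zero_of_abs_lt_dvd hd habs
      have : (k' : ℤ) = (k : ℤ) := by omega
      exact hkk (Fin.ext (by exact_mod_cast this))
    rw [Fin.sum_univ_eq_sum_range (fun i => μ ^ i) n, geom_sum_eq hμ1, hμn]
    simp

lemma fvec_orth {n1 n2 : ℕ} (h1 : 3 ≤ n1) (h2 : 3 ≤ n2) (κ κ' : Fin n2 × Fin n1) :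
    ∑ p : Fin n2 × Fin n1, (fvec n1 n2 κ p)⁻¹ * fvec n1 n2 κ' p
      = if κ' = κ then ((n1 : ℂ) * n2) else 0 := by
  have key : ∀ p : Fin n2 × Fin n1, (fvec n1 n2 κ p)⁻¹ * fvec n1 n2 κ' p
      = ((zet n2 (κ.1 : ℕ))⁻¹ * zet n2 (κ'.1 : ℕ)) ^ (p.1 : ℕ)
        * ((zet n1 (κ.2 : ℕ))⁻¹ * zet n1 (κ'.2 : ℕ)) ^ (p.2 : ℕ) := by
    intro p
    rw [fvec, fvec, mul_pow, mul_pow, inv_pow, inv_pow, mul_inv]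
    ring
  simp only [key]
  rw [Fintype.sum_prod_type]
  rw [← Fintype.sum_mul_sum (fun a : Fin n2 => ((zet n2 (κ.1:ℕ))⁻¹ * zet n2 (κ'.1:ℕ)) ^ (a:ℕ))
      (fun b : Fin n1 => ((zet n1 (κ.2:ℕ))⁻¹ * zet n1 (κ'.2:ℕ)) ^ (b:ℕ))]
  rw [zet_geom h2 κ.1 κ'.1, zet_geom h1 κ.2 κ'.2]
  by_cases ha : κ'.1 = κ.1 <;> by_cases hb : κ'.2 = κ.2
  · rw [if_pos ha, if_pos hb, if_pos (Prod.ext ha hb)]; ring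
  · rw [if_pos ha, if_neg hb, if_neg (fun h => hb (congrArg Prod.snd h))]; ring
  · rw [if_neg ha, if_pos hb, if_neg (fun h => ha (congrArg Prod.fst h))]; ring
  · rw [if_neg ha, if_neg hb, if_neg (fun h => ha (congrArg Prod.fst h))]; ring

def Wmat (n1 n2 : ℕ) : Matrix (Fin n2 × Fin n1) (Fin n2 × Fin n1) ℂ :=
  fun p κ => fvec n1 n2 κ p

def Winv (n1 n2 : ℕ) : Matrix (Fin n2 × Fin n1) (Fin n2 × Fin n1) ℂ :=
  fun κ p => (((n1 : ℂ) * n2)⁻¹) * (fvec n1 n2 κ p)⁻¹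

lemma Winv_Wmat {n1 n2 : ℕ} (h1 : 3 ≤ n1) (h2 : 3 ≤ n2) :
    Winv n1 n2 * Wmat n1 n2 = 1 := by
  ext κ κ'
  rw [Matrix.mul_apply]
  have : ∀ p, Winv n1 n2 κ p * Wmat n1 n2 p κ'
      = ((n1 : ℂ) * n2)⁻¹ * ((fvec n1 n2 κ p)⁻¹ * fvec n1 n2 κ' p) := by
    intro p; rw [Winv, Wmat]; ring
  simp only [this]
  rw [← Finset.mul_sum, fvec_orth h1 h2 κ κ']
  have ha : (n1 : ℂ) ≠ 0 := Nat.cast_ne_zero.mpr (by omega)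
  have hb : (n2 : ℂ) ≠ 0 := Nat.cast_ne_zero.mpr (by omega)
  have hne : ((n1 : ℂ) * n2) ≠ 0 := mul_ne_zero ha hb
  by_cases h : κ' = κ
  · subst h
    rw [if_pos rfl, Matrix.one_apply_eq]
    field_simp
  · simp [Matrix.one_apply, h, Ne.symm h]

def lam2m (d1 d2 br bi : ℝ) : ℝ :=
  (d1 + d2) / 2 - Real.sqrt (((d1 - d2) / 2) ^ 2 + br ^ 2 + bi ^ 2)
def lam2p (d1 d2 br bi : ℝ) : ℝ :=
  (d1 + d2) / 2 + Real.sqrt (((d1 - d2) / 2) ^ 2 + br ^ 2 + bi ^ 2)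

lemma spec2 (d1 d2 br bi : ℝ) :
    spectrum ℂ (!![(d1 : ℂ), (br : ℂ) + (bi : ℂ) * I;
                   (br : ℂ) - (bi : ℂ) * I, (d2 : ℂ)]) =
      {((lam2m d1 d2 br bi : ℝ) : ℂ), ((lam2p d1 d2 br bi : ℝ) : ℂ)} := by
  have hs : Real.sqrt (((d1 - d2) / 2) ^ 2 + br ^ 2 + bi ^ 2) ^ 2
      = ((d1 - d2) / 2) ^ 2 + br ^ 2 + bi ^ 2 := Real.sq_sqrt (by positivity)
  have hsr : Real.sqrt (((d1 - d2) / 2) ^ 2 + br ^ 2 + bi ^ 2) ^ 2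
      = (d1 - d2) ^ 2 / 4 + br ^ 2 + bi ^ 2 := by rw [hs]; ring
  have hs' : ((Real.sqrt (((d1 - d2) / 2) ^ 2 + br ^ 2 + bi ^ 2) : ℝ) : ℂ) ^ 2
      = ((d1 : ℂ) - d2) ^ 2 / 4 + (br : ℂ) ^ 2 + (bi : ℂ) ^ 2 := by exact_mod_cast hsr
  ext z
  rw [spectrum.mem_iff, Matrix.isUnit_iff_isUnit_det, isUnit_iff_ne_zero, not_not]
  have hd : (algebraMap ℂ (Matrix (Fin 2) (Fin 2) ℂ) z
      - !![(d1 : ℂ), (br : ℂ) + (bi : ℂ) * I; (br : ℂ) - (bi : ℂ) * I, (d2 : ℂ)]).det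
      = (z - ((lam2m d1 d2 br bi : ℝ) : ℂ)) * (z - ((lam2p d1 d2 br bi : ℝ) : ℂ)) := by
    rw [Matrix.det_fin_two]
    simp only [Matrix.sub_apply, Matrix.algebraMap_matrix_apply, Matrix.cons_val',
      Matrix.cons_val_zero, Matrix.cons_val_one, Matrix.head_cons, Matrix.head_fin_const,
      Matrix.empty_val', Matrix.cons_val_fin_one, Matrix.of_apply]
    norm_num
    rw [lam2m, lam2p]
    push_cast
    linear_combination hs' + Complex.I_sq * (bi : ℂ) ^ 2
  rw [hd, mul_eq_zero, sub_eq_zero, sub_eq_zero]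
  simp [Set.mem_insert_iff]


lemma lam2m_le_lam2p (d1 d2 br bi : ℝ) : lam2m d1 d2 br bi ≤ lam2p d1 d2 br bi := by
  have : 0 ≤ Real.sqrt (((d1 - d2) / 2) ^ 2 + br ^ 2 + bi ^ 2) := Real.sqrt_nonneg _
  rw [lam2m, lam2p]; linarith

lemma spec_blockDiag {o : Type} [Fintype o] [DecidableEq o]
    (Ms : o → Matrix (Fin 2) (Fin 2) ℂ) (z : ℂ) :
    z ∈ spectrum ℂ (blockDiagonal Ms) ↔ ∃ k, z ∈ spectrum ℂ (Ms k) := by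
  simp only [spectrum.mem_iff, Matrix.isUnit_iff_isUnit_det, isUnit_iff_ne_zero, not_not]
  have hkey : algebraMap ℂ (Matrix (Fin 2 × o) (Fin 2 × o) ℂ) z - blockDiagonal Ms
      = blockDiagonal (fun k => algebraMap ℂ (Matrix (Fin 2) (Fin 2) ℂ) z - Ms k) := by
    ext ⟨i, k⟩ ⟨j, k'⟩
    by_cases h : k = k'
    · subst h
      simp [Matrix.algebraMap_matrix_apply, Matrix.blockDiagonal_apply, Prod.ext_iff]
    · simp [Matrix.algebraMap_matrix_apply, Matrix.blockDiagonal_apply, Prod.ext_iff, h]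
  rw [hkey, Matrix.det_blockDiagonal, Finset.prod_eq_zero_iff]
  simp

lemma spectrum_real_iff {J : Type} [Fintype J] [DecidableEq J] (M : Matrix J J ℝ) (r : ℝ) :
    r ∈ spectrum ℝ M ↔ (r : ℂ) ∈ spectrum ℂ (M.map Complex.ofReal) := by
  simp only [spectrum.mem_iff, Matrix.isUnit_iff_isUnit_det, isUnit_iff_ne_zero, not_not]
  have hkey : algebraMap ℂ (Matrix J J ℂ) (r : ℂ) - M.map Complex.ofReal
      = (algebraMap ℝ (Matrix J J ℝ) r - M).map Complex.ofReal := by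
    ext i j
    simp [Matrix.algebraMap_matrix_apply, Matrix.map_apply, apply_ite]
  rw [hkey]
  rw [show (algebraMap ℝ (Matrix J J ℝ) r - M).map Complex.ofReal
      = Complex.ofRealHom.mapMatrix (algebraMap ℝ (Matrix J J ℝ) r - M) from rfl]
  rw [← RingHom.map_det]
  simp

def sumFin2 (I : Type) : I ⊕ I ≃ Fin 2 × I where
  toFun := Sum.elim (fun κ => (0, κ)) (fun κ => (1, κ))
  invFun x := if x.1 = 0 then .inl x.2 else .inr x.2
  left_inv := by rintro (κ | κ) <;> simp
  right_inv := by
    rintro ⟨a, κ⟩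
    fin_cases a <;> simp

lemma fromBlocks_diag_eq_blockDiagonal {I : Type} [Fintype I] [DecidableEq I]
    (f g h k : I → ℂ) :
    fromBlocks (diagonal f) (diagonal g) (diagonal h) (diagonal k)
      = (blockDiagonal (fun κ => !![f κ, g κ; h κ, k κ])).submatrix (sumFin2 I) (sumFin2 I) := by
  ext p q
  rcases p with κ | κ <;> rcases q with κ' | κ' <;>
    simp [Matrix.blockDiagonal_apply, sumFin2, Matrix.diagonal_apply, fromBlocks] <;>
    by_cases h : κ = κ' <;> simp [h]

lemma zet_eq (n k : ℕ) :
    zet n k = ((Real.cos (ang n k) : ℝ) : ℂ) + ((Real.sin (ang n k) : ℝ) : ℂ) * I := by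
  rw [zet, Complex.exp_mul_I, ← Complex.ofReal_cos, ← Complex.ofReal_sin]

lemma zet_inv_eq (n k : ℕ) :
    (zet n k)⁻¹ = ((Real.cos (ang n k) : ℝ) : ℂ) - ((Real.sin (ang n k) : ℝ) : ℂ) * I := by
  rw [zet, ← Complex.exp_neg]
  have : -(((ang n k : ℝ) : ℂ) * I) = (((-ang n k : ℝ)) : ℂ) * I := by (try push_cast); (try ring)
  rw [this, Complex.exp_mul_I, ← Complex.ofReal_cos, ← Complex.ofReal_sin,
    Real.cos_neg, Real.sin_neg]
  push_cast
  ring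

def ccv (n1 n2 : ℕ) (κ : Fin n2 × Fin n1) : ℝ :=
  Real.cos (ang n1 (κ.2 : ℕ)) + Real.cos (ang n2 (κ.1 : ℕ))
def ssv (n1 n2 : ℕ) (κ : Fin n2 × Fin n1) : ℝ :=
  Real.sin (ang n1 (κ.2 : ℕ)) + Real.sin (ang n2 (κ.1 : ℕ))

lemma symC_eq (n1 n2 : ℕ) (x y z : ℝ) (κ : Fin n2 × Fin n1) :
    symC n1 n2 x y z κ
      = ((y + (z + x) * ccv n1 n2 κ : ℝ) : ℂ) + (((z - x) * ssv n1 n2 κ : ℝ) : ℂ) * I := by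
  rw [symC, zet_inv_eq, zet_inv_eq, zet_eq, zet_eq, ccv, ssv]
  push_cast
  ring

section Params
variable (n1 n2 : ℕ) (φ ρ11 ρ12 ρ21 ρ22 : ℝ)

def d1v (κ : Fin n2 × Fin n1) : ℝ := 1 + 2 * ρ11 * ccv n1 n2 κ
def d2v (κ : Fin n2 × Fin n1) : ℝ := 1 + 2 * ρ22 * ccv n1 n2 κ
def brv (κ : Fin n2 × Fin n1) : ℝ := φ + (ρ12 + ρ21) * ccv n1 n2 κ
def biv (κ : Fin n2 × Fin n1) : ℝ := (ρ12 - ρ21) * ssv n1 n2 κ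

def Umat : Matrix ((Fin n2 × Fin n1) ⊕ (Fin n2 × Fin n1)) ((Fin n2 × Fin n1) ⊕ (Fin n2 × Fin n1)) ℂ :=
  fromBlocks (Wmat n1 n2) 0 0 (Wmat n1 n2)

def Bmat : Matrix ((Fin n2 × Fin n1) ⊕ (Fin n2 × Fin n1)) ((Fin n2 × Fin n1) ⊕ (Fin n2 × Fin n1)) ℂ :=
  fromBlocks
    (diagonal fun κ => ((d1v n1 n2 ρ11 κ : ℝ) : ℂ))
    (diagonal fun κ => ((brv n1 n2 φ ρ12 ρ21 κ : ℝ) : ℂ) + ((biv n1 n2 ρ12 ρ21 κ : ℝ) : ℂ) * I)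
    (diagonal fun κ => ((brv n1 n2 φ ρ12 ρ21 κ : ℝ) : ℂ) - ((biv n1 n2 ρ12 ρ21 κ : ℝ) : ℂ) * I)
    (diagonal fun κ => ((d2v n1 n2 ρ22 κ : ℝ) : ℂ))

variable {n1 n2}

lemma CW (h1 : 3 ≤ n1) (h2 : 3 ≤ n2) (x y z : ℝ) :
    (Cmat n1 n2 x y z).map Complex.ofReal * Wmat n1 n2
      = Wmat n1 n2 * diagonal (symC n1 n2 x y z) := by
  ext p κ
  rw [Matrix.mul_apply, Matrix.mul_diagonal]
  have : ∀ q, (Cmat n1 n2 x y z).map Complex.ofReal p q * Wmat n1 n2 q κ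
      = ((Cmat n1 n2 x y z p q : ℝ) : ℂ) * fvec n1 n2 κ q := fun q => rfl
  simp only [this]
  rw [Cmat_row_sum h1 h2 x y z κ p, Wmat]
  exact mul_comm _ _

lemma QU (h1 : 3 ≤ n1) (h2 : 3 ≤ n2) :
    (Qcmat n1 n2 φ ρ11 ρ12 ρ21 ρ22).map Complex.ofReal * Umat n1 n2
      = Umat n1 n2 * Bmat n1 n2 φ ρ11 ρ12 ρ21 ρ22 := by
  have e11 : symC n1 n2 ρ11 1 ρ11 = fun κ => ((d1v n1 n2 ρ11 κ : ℝ) : ℂ) := by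
    funext κ; rw [symC_eq, d1v]; (try push_cast); (try ring)
  have e22 : symC n1 n2 ρ22 1 ρ22 = fun κ => ((d2v n1 n2 ρ22 κ : ℝ) : ℂ) := by
    funext κ; rw [symC_eq, d2v]; (try push_cast); (try ring)
  have e12 : symC n1 n2 ρ21 φ ρ12
      = fun κ => ((brv n1 n2 φ ρ12 ρ21 κ : ℝ) : ℂ) + ((biv n1 n2 ρ12 ρ21 κ : ℝ) : ℂ) * I := by
    funext κ; rw [symC_eq, brv, biv]; (try push_cast); (try ring)
  have e21 : symC n1 n2 ρ12 φ ρ21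
      = fun κ => ((brv n1 n2 φ ρ12 ρ21 κ : ℝ) : ℂ) - ((biv n1 n2 ρ12 ρ21 κ : ℝ) : ℂ) * I := by
    funext κ; rw [symC_eq, brv, biv]; (try push_cast); (try ring)
  rw [Qcmat, Cmat_transpose h1 h2, Matrix.fromBlocks_map, Umat, Bmat,
    Matrix.fromBlocks_multiply, Matrix.fromBlocks_multiply]
  rw [← e11, ← e22, ← e12, ← e21]
  simp only [Matrix.mul_zero, Matrix.zero_mul, add_zero, zero_add]
  rw [CW h1 h2, CW h1 h2, CW h1 h2, CW h1 h2]

lemma Umat_isUnit (h1 : 3 ≤ n1) (h2 : 3 ≤ n2) : IsUnit (Umat n1 n2) := by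
  refine (Matrix.isUnit_iff_isUnit_det _).mpr (Matrix.isUnit_det_of_left_inverse
    (B := fromBlocks (Winv n1 n2) 0 0 (Winv n1 n2)) ?_)
  rw [Umat, Matrix.fromBlocks_multiply]
  simp only [Matrix.mul_zero, Matrix.zero_mul, add_zero, zero_add]
  rw [Winv_Wmat h1 h2, ← Matrix.fromBlocks_one]

theorem spec_Qc (h1 : 3 ≤ n1) (h2 : 3 ≤ n2) (r : ℝ) :
    r ∈ spectrum ℝ (Qcmat n1 n2 φ ρ11 ρ12 ρ21 ρ22) ↔
    ∃ κ : Fin n2 × Fin n1,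
      r = lam2m (d1v n1 n2 ρ11 κ) (d2v n1 n2 ρ22 κ) (brv n1 n2 φ ρ12 ρ21 κ) (biv n1 n2 ρ12 ρ21 κ)
      ∨ r = lam2p (d1v n1 n2 ρ11 κ) (d2v n1 n2 ρ22 κ) (brv n1 n2 φ ρ12 ρ21 κ)
          (biv n1 n2 ρ12 ρ21 κ) := by
  rw [spectrum_real_iff]
  obtain ⟨u, hu⟩ := Umat_isUnit (n1 := n1) (n2 := n2) h1 h2
  have hQ : (Qcmat n1 n2 φ ρ11 ρ12 ρ21 ρ22).map Complex.ofReal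
      = (u : Matrix _ _ ℂ) * Bmat n1 n2 φ ρ11 ρ12 ρ21 ρ22 * ((u⁻¹ : _ˣ) : Matrix _ _ ℂ) := by
    have hQU := QU φ ρ11 ρ12 ρ21 ρ22 h1 h2
    rw [← hu] at hQU
    calc (Qcmat n1 n2 φ ρ11 ρ12 ρ21 ρ22).map Complex.ofReal
        = (Qcmat n1 n2 φ ρ11 ρ12 ρ21 ρ22).map Complex.ofReal * (u : Matrix _ _ ℂ)
            * ((u⁻¹ : _ˣ) : Matrix _ _ ℂ) := by
          rw [Units.mul_inv_cancel_right]
      _ = _ := by rw [hQU]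
  rw [hQ, spectrum.units_conjugate]
  rw [Bmat, fromBlocks_diag_eq_blockDiagonal]
  have hre : (blockDiagonal fun κ =>
        !![((d1v n1 n2 ρ11 κ : ℝ) : ℂ),
            ((brv n1 n2 φ ρ12 ρ21 κ : ℝ) : ℂ) + ((biv n1 n2 ρ12 ρ21 κ : ℝ) : ℂ) * I;
            ((brv n1 n2 φ ρ12 ρ21 κ : ℝ) : ℂ) - ((biv n1 n2 ρ12 ρ21 κ : ℝ) : ℂ) * I,
            ((d2v n1 n2 ρ22 κ : ℝ) : ℂ)]).submatrix (sumFin2 (Fin n2 × Fin n1)) (sumFin2 (Fin n2 × Fin n1))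
      = (Matrix.reindexAlgEquiv ℂ ℂ (sumFin2 (Fin n2 × Fin n1)).symm) (blockDiagonal fun κ =>
        !![((d1v n1 n2 ρ11 κ : ℝ) : ℂ),
            ((brv n1 n2 φ ρ12 ρ21 κ : ℝ) : ℂ) + ((biv n1 n2 ρ12 ρ21 κ : ℝ) : ℂ) * I;
            ((brv n1 n2 φ ρ12 ρ21 κ : ℝ) : ℂ) - ((biv n1 n2 ρ12 ρ21 κ : ℝ) : ℂ) * I,
            ((d2v n1 n2 ρ22 κ : ℝ) : ℂ)]) := by
    rw [Matrix.reindexAlgEquiv_apply, Matrix.reindex_apply]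
    simp
  rw [hre, AlgEquiv.spectrum_eq]
  rw [spec_blockDiag]
  constructor
  · rintro ⟨κ, hκ⟩
    rw [spec2] at hκ
    rcases hκ with h | h
    · exact ⟨κ, Or.inl (Complex.ofReal_injective h)⟩
    · exact ⟨κ, Or.inr (Complex.ofReal_injective (by simpa using h))⟩
  · rintro ⟨κ, h | h⟩ <;> refine ⟨κ, ?_⟩ <;> rw [spec2]
    · rw [h]; exact Set.mem_insert _ _
    · rw [h]; exact Set.mem_insert_of_mem _ rfl

end Params
end
end Aux

noncomputable section Endgame
def FF (φ ρ11 ρ12 ρ21 ρ22 : ℝ) (w : ℝ × ℝ) : ℝ :=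
  lam2m (1 + 2 * ρ11 * (Real.cos w.1 + Real.cos w.2))
        (1 + 2 * ρ22 * (Real.cos w.1 + Real.cos w.2))
        (φ + (ρ12 + ρ21) * (Real.cos w.1 + Real.cos w.2))
        ((ρ12 - ρ21) * (Real.sin w.1 + Real.sin w.2))

lemma FF_cont (φ ρ11 ρ12 ρ21 ρ22 : ℝ) : Continuous (FF φ ρ11 ρ12 ρ21 ρ22) := by
  unfold FF lam2m
  fun_prop

lemma lm_eq {n1 n2 : ℕ} (φ ρ11 ρ12 ρ21 ρ22 : ℝ) (κ : Fin n2 × Fin n1) :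
    lam2m (d1v n1 n2 ρ11 κ) (d2v n1 n2 ρ22 κ) (brv n1 n2 φ ρ12 ρ21 κ) (biv n1 n2 ρ12 ρ21 κ)
      = FF φ ρ11 ρ12 ρ21 ρ22 (ang n1 (κ.2 : ℕ), ang n2 (κ.1 : ℕ)) := rfl

lemma ang_mem {n : ℕ} (hn : 3 ≤ n) (k : ℕ) (hk : k ≤ n) : ang n k ∈ Set.Icc 0 (2 * Real.pi) := by
  have hπ := Real.pi_pos
  have hn0 : (0 : ℝ) < n := by positivity
  constructor
  · rw [ang]; positivity
  · rw [ang, div_le_iff₀ hn0]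
    have : (k : ℝ) ≤ (n : ℝ) := by exact_mod_cast hk
    nlinarith

/-- The smallest eigenvalues of the block-circulant approximations are uniformly
bounded below by a constant to which they converge as `n1, n2 → ∞`. -/
theorem circulant_min_eigenvalue_limit (φ ρ11 ρ12 ρ21 ρ22 : ℝ) :
    ∃ C : ℝ,
      (∀ n1 n2 : ℕ, 3 ≤ n1 → 3 ≤ n2 → C ≤ lamMin (Qcmat n1 n2 φ ρ11 ρ12 ρ21 ρ22)) ∧
      (∀ ε > 0, ∃ N : ℕ, 3 ≤ N ∧ ∀ n1 n2 : ℕ, N ≤ n1 → N ≤ n2 →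
        |lamMin (Qcmat n1 n2 φ ρ11 ρ12 ρ21 ρ22) - C| < ε) := by
  have hπ := Real.pi_pos
  set F := FF φ ρ11 ρ12 ρ21 ρ22 with hF
  set K : Set (ℝ × ℝ) := (Set.Icc 0 (2 * Real.pi)) ×ˢ (Set.Icc 0 (2 * Real.pi)) with hK
  have hKc : IsCompact K := isCompact_Icc.prod isCompact_Icc
  have hKne : K.Nonempty := ⟨(0, 0), by constructor <;> constructor <;> positivity⟩
  obtain ⟨w0, hw0K, hw0min⟩ := hKc.exists_isMinOn hKne (FF_cont φ ρ11 ρ12 ρ21 ρ22).continuousOn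
  set C := F w0 with hC
  -- adjusted minimizer with coordinates in [0, 2π)
  set a : ℝ := if w0.1 = 2 * Real.pi then 0 else w0.1 with ha
  set b : ℝ := if w0.2 = 2 * Real.pi then 0 else w0.2 with hb
  have hFab : F (a, b) = C := by
    rw [hC, hF]
    have h1 : ∀ t : ℝ, Real.cos (if t = 2 * Real.pi then 0 else t) = Real.cos t := by
      intro t; split_ifs with h
      · rw [h, Real.cos_two_pi, Real.cos_zero]
      · rfl
    have h2 : ∀ t : ℝ, Real.sin (if t = 2 * Real.pi then 0 else t) = Real.sin t := by
      intro t; split_ifs with h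
      · rw [h, Real.sin_two_pi, Real.sin_zero]
      · rfl
    show FF φ ρ11 ρ12 ρ21 ρ22 (a, b) = FF φ ρ11 ρ12 ρ21 ρ22 w0
    rw [FF, FF, ha, hb]
    rw [h1 w0.1, h2 w0.1, h1 w0.2, h2 w0.2]
  have haI : 0 ≤ a ∧ a < 2 * Real.pi := by
    rw [ha]; split_ifs with h
    · exact ⟨le_refl 0, by positivity⟩
    · exact ⟨hw0K.1.1, lt_of_le_of_ne hw0K.1.2 h⟩
  have hbI : 0 ≤ b ∧ b < 2 * Real.pi := by
    rw [hb]; split_ifs with h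
    · exact ⟨le_refl 0, by positivity⟩
    · exact ⟨hw0K.2.1, lt_of_le_of_ne hw0K.2.2 h⟩
  -- the two key properties of lamMin for given n1 n2
  have key : ∀ n1 n2 : ℕ, 3 ≤ n1 → 3 ≤ n2 →
      (C ≤ lamMin (Qcmat n1 n2 φ ρ11 ρ12 ρ21 ρ22)) ∧
      (∀ κ : Fin n2 × Fin n1, lamMin (Qcmat n1 n2 φ ρ11 ρ12 ρ21 ρ22)
          ≤ F (ang n1 (κ.2 : ℕ), ang n2 (κ.1 : ℕ))) := by
    intro n1 n2 h1 h2
    have hgrid : ∀ κ : Fin n2 × Fin n1,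
        (ang n1 (κ.2 : ℕ), ang n2 (κ.1 : ℕ)) ∈ K := by
      intro κ
      exact ⟨ang_mem h1 _ (le_of_lt κ.2.isLt), ang_mem h2 _ (le_of_lt κ.1.isLt)⟩
    have hlow : ∀ r ∈ spectrum ℝ (Qcmat n1 n2 φ ρ11 ρ12 ρ21 ρ22), C ≤ r := by
      intro r hr
      rw [spec_Qc φ ρ11 ρ12 ρ21 ρ22 h1 h2] at hr
      obtain ⟨κ, hκ | hκ⟩ := hr
      · rw [hκ, lm_eq]
        exact hw0min (hgrid κ)
      · rw [hκ]
        exact le_trans (le_trans (hw0min (hgrid κ)) (le_of_eq (lm_eq _ _ _ _ _ κ).symm))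
          (lam2m_le_lam2p _ _ _ _)
    have hne2 : 0 < n2 := by omega
    have hne1 : 0 < n1 := by omega
    have hmem : ∀ κ : Fin n2 × Fin n1,
        F (ang n1 (κ.2 : ℕ), ang n2 (κ.1 : ℕ)) ∈ spectrum ℝ (Qcmat n1 n2 φ ρ11 ρ12 ρ21 ρ22) := by
      intro κ
      rw [spec_Qc φ ρ11 ρ12 ρ21 ρ22 h1 h2]
      exact ⟨κ, Or.inl (lm_eq _ _ _ _ _ κ).symm⟩
    have hSne : (spectrum ℝ (Qcmat n1 n2 φ ρ11 ρ12 ρ21 ρ22)).Nonempty :=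
      ⟨_, hmem (⟨0, hne2⟩, ⟨0, hne1⟩)⟩
    have hbdd : BddBelow (spectrum ℝ (Qcmat n1 n2 φ ρ11 ρ12 ρ21 ρ22)) := ⟨C, hlow⟩
    exact ⟨le_csInf hSne hlow, fun κ => csInf_le hbdd (hmem κ)⟩
  refine ⟨C, fun n1 n2 h1 h2 => (key n1 n2 h1 h2).1, ?_⟩
  intro ε hε
  -- continuity at (a, b)
  have hcont : ContinuousAt F (a, b) := (FF_cont φ ρ11 ρ12 ρ21 ρ22).continuousAt
  rw [Metric.continuousAt_iff] at hcont
  obtain ⟨δ, hδ, hδprop⟩ := hcont ε hε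
  obtain ⟨N0, hN0⟩ := exists_nat_gt (2 * Real.pi / δ)
  refine ⟨max 3 (N0 + 1), le_max_left _ _, ?_⟩
  intro n1 n2 hn1 hn2
  have h1 : 3 ≤ n1 := le_trans (le_max_left _ _) hn1
  have h2 : 3 ≤ n2 := le_trans (le_max_left _ _) hn2
  have hn1' : (N0 : ℝ) < n1 := by
    have : N0 + 1 ≤ n1 := le_trans (le_max_right _ _) hn1
    exact_mod_cast by omega
  have hn2' : (N0 : ℝ) < n2 := by
    have : N0 + 1 ≤ n2 := le_trans (le_max_right _ _) hn2
    exact_mod_cast by omega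
  have hn1pos : (0 : ℝ) < n1 := by positivity
  have hn2pos : (0 : ℝ) < n2 := by positivity
  -- 2π/n < δ
  have hstep : ∀ n : ℕ, (N0 : ℝ) < n → 2 * Real.pi / n < δ := by
    intro n hn
    have hnpos : (0 : ℝ) < n := lt_of_le_of_lt (by positivity) hn
    rw [div_lt_iff₀ hnpos]
    have hN0' : 2 * Real.pi / δ < n := lt_of_le_of_lt (le_of_lt hN0) hn
    rw [div_lt_iff₀ hδ] at hN0'
    linarith [mul_comm δ (n : ℝ) ▸ hN0']
  -- choose grid indices
  have pick : ∀ (n : ℕ), 3 ≤ n → (N0 : ℝ) < n → ∀ t : ℝ, 0 ≤ t → t < 2 * Real.pi →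
      ∃ k : Fin n, |ang n (k : ℕ) - t| < δ := by
    intro n hn hnN t ht ht2
    have hnpos : (0 : ℝ) < n := lt_of_le_of_lt (by positivity) hnN
    set k0 := ⌊t * n / (2 * Real.pi)⌋₊ with hk0
    have harg0 : 0 ≤ t * n / (2 * Real.pi) := by positivity
    have hklt : k0 < n := by
      rw [hk0, Nat.floor_lt harg0]
      rw [div_lt_iff₀ (by positivity)]
      have : t * n < 2 * Real.pi * n := by nlinarith
      linarith [this]
    refine ⟨⟨k0, hklt⟩, ?_⟩
    have hfl : (k0 : ℝ) ≤ t * n / (2 * Real.pi) := Nat.floor_le harg0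
    have hfu : t * n / (2 * Real.pi) < (k0 : ℝ) + 1 := Nat.lt_floor_add_one _
    have hang : ang n k0 ≤ t := by
      rw [ang, div_le_iff₀ hnpos]
      rw [le_div_iff₀ (by positivity : (0:ℝ) < 2 * Real.pi)] at hfl
      nlinarith [hfl]
    have hfu' : t * n < ((k0 : ℝ) + 1) * (2 * Real.pi) := by
      rw [div_lt_iff₀ (by positivity : (0:ℝ) < 2 * Real.pi)] at hfu
      exact hfu
    have key2 : t < 2 * Real.pi / n + 2 * Real.pi * k0 / n := by
      rw [← add_div, lt_div_iff₀ hnpos]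
      nlinarith [hfu']
    have hang2 : t - ang n k0 < 2 * Real.pi / n := by
      rw [ang]; linarith
    have h3 : 2 * Real.pi / n < δ := hstep n hnN
    rw [abs_lt]
    constructor
    · linarith
    · linarith
  -- use the grid approximation
  obtain ⟨k1, hk1⟩ := pick n1 h1 hn1' a haI.1 haI.2
  obtain ⟨k2, hk2⟩ := pick n2 h2 hn2' b hbI.1 hbI.2
  have hdist : dist ((ang n1 (k1 : ℕ), ang n2 (k2 : ℕ))) (a, b) < δ := by
    rw [Prod.dist_eq]
    apply max_lt <;> rw [Real.dist_eq]
    · exact hk1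
    · exact hk2
  have hFF := hδprop hdist
  rw [Real.dist_eq, hFab] at hFF
  have hFF' := abs_lt.mp hFF
  have hCle := (key n1 n2 h1 h2).1
  have hup := (key n1 n2 h1 h2).2 (k2, k1)
  rw [abs_lt]
  constructor
  · linarith
  · have : lamMin (Qcmat n1 n2 φ ρ11 ρ12 ρ21 ρ22) ≤ F (ang n1 (k1 : ℕ), ang n2 (k2 : ℕ)) := hup
    linarith

end Endgame
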